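/- Let Z_* = U U_*(I,:)⁻¹ D_U(I,I) D_τ(I,I)^{-1/2}, where U_* = D_U U is the row-normalized version of U (D_U diagonal with D_U(i,i) = 1/‖U(i,:)‖₂), and Y = D_o Π D_τ(I,I)^{1/2} D_U(I,I)⁻¹ satisfies U_* = Y U_*(I,:). Then for every i, Π(i,:) = Z_*(i,:)/‖Z_*(i,:)‖₁. -/

import Mathlib

open Matrix

/-- membership recovery from the cone structure:
`Π(i,:) = Z_*(i,:) / ‖Z_*(i,:)‖₁` where
`Z_* = U U_*(I,:)⁻¹ D_U(I,I) D_τ(I,I)^{-1/2}`. -/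
theorem membership_recovery_cone {N K : ℕ}
    (U Pm : Matrix (Fin N) (Fin K) ℝ)
    (d : Fin N → ℝ) (hd : ∀ i, 0 < d i)
    (hnn : ∀ i k, 0 ≤ Pm i k) (hrow : ∀ i, ∑ k, Pm i k = 1)
    (hPrank : Pm.rank = K)
    (I : Fin K → Fin N) (hI : Function.Injective I)
    (hpure : Pm.submatrix I id = 1)
    (hrows : ∀ i, U i ≠ 0) :
    -- D_U(i,i) = 1/‖U(i,:)‖₂ and U_* = D_U U
    let DU : Fin N → ℝ := fun i => (Real.sqrt (∑ j, (U i j) ^ 2))⁻¹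
    let Ustar : Matrix (Fin N) (Fin K) ℝ := Matrix.diagonal DU * U
    -- U_τ = D_τ^{1/2} U, and D_o(i,i) = 1/‖Π(i,:) U_τ(I,:)‖₂
    let Uτ : Matrix (Fin N) (Fin K) ℝ :=
      Matrix.diagonal (fun i => Real.sqrt (d i)) * U
    let Do : Fin N → ℝ := fun i =>
      (Real.sqrt (∑ k, (∑ l, Pm i l * Uτ (I l) k) ^ 2))⁻¹
    -- hypothesis: U_* = Y U_*(I,:) with Y = D_o Π D_τ(I,I)^{1/2} D_U(I,I)⁻¹
    ∀ _hY : Ustar = Matrix.diagonal Do * Pm *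
        Matrix.diagonal (fun k => Real.sqrt (d (I k))) *
        Matrix.diagonal (fun k => (DU (I k))⁻¹) * Ustar.submatrix I id,
    ∀ _hinv : IsUnit (Ustar.submatrix I id),
    let Zs : Matrix (Fin N) (Fin K) ℝ :=
      U * (Ustar.submatrix I id)⁻¹ * Matrix.diagonal (fun k => DU (I k)) *
        Matrix.diagonal (fun k => (Real.sqrt (d (I k)))⁻¹)
    ∀ i k, Pm i k = Zs i k / (∑ k', |Zs i k'|) := by
  intro DU Ustar Uτ Do hY hinv Zs i k
  set S := Ustar.submatrix I id with hSdef
  have hDUpos : ∀ i, 0 < DU i := by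
    intro i
    have h : 0 < ∑ j, (U i j) ^ 2 := by
      obtain ⟨j, hj⟩ := Function.ne_iff.mp (hrows i)
      exact Finset.sum_pos' (fun j _ => sq_nonneg _)
        ⟨j, Finset.mem_univ j, pow_pos (abs_pos.mpr hj) 2 |>.trans_le (by rw [sq_abs])⟩
    exact inv_pos.mpr (Real.sqrt_pos.mpr h)
  have hDone : ∀ i, 0 ≤ Do i := fun i => inv_nonneg.mpr (Real.sqrt_nonneg _)
  have hS : S * S⁻¹ = 1 :=
    Matrix.mul_nonsing_inv _ ((Matrix.isUnit_iff_isUnit_det _).mp hinv)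
  have hM : Matrix.diagonal DU * Zs = Matrix.diagonal Do * Pm := by
    have h1 : Matrix.diagonal DU * Zs
        = Ustar * (S⁻¹ * ((Matrix.diagonal (fun k => DU (I k))) *
          Matrix.diagonal (fun k => (Real.sqrt (d (I k)))⁻¹))) := by
      simp only [Zs, Ustar, Matrix.mul_assoc]
      rfl
    rw [h1, hY]
    rw [Matrix.diagonal_mul_diagonal]
    have h2 : Matrix.diagonal Do * Pm * Matrix.diagonal (fun k => Real.sqrt (d (I k))) *
        Matrix.diagonal (fun k => (DU (I k))⁻¹) * S *
        (S⁻¹ * Matrix.diagonal fun k => DU (I k) * (Real.sqrt (d (I k)))⁻¹)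
        = Matrix.diagonal Do * Pm * ((Matrix.diagonal (fun k => Real.sqrt (d (I k))) *
          Matrix.diagonal (fun k => (DU (I k))⁻¹)) * ((S * S⁻¹) *
          Matrix.diagonal (fun k => DU (I k) * (Real.sqrt (d (I k)))⁻¹))) := by
      simp only [Matrix.mul_assoc]
    rw [h2, hS, Matrix.one_mul, Matrix.diagonal_mul_diagonal]
    rw [Matrix.diagonal_mul_diagonal]
    have h3 : (fun k => Real.sqrt (d (I k)) * (DU (I k))⁻¹ * (DU (I k) * (Real.sqrt (d (I k)))⁻¹))
        = fun _ => (1:ℝ) := by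
      funext k
      have e1 : (DU (I k)) ≠ 0 := ne_of_gt (hDUpos (I k))
      have e2 : Real.sqrt (d (I k)) ≠ 0 := ne_of_gt (Real.sqrt_pos.mpr (hd (I k)))
      field_simp
    rw [h3, Matrix.diagonal_one, Matrix.mul_one]
  have hkey : ∀ k, DU i * Zs i k = Do i * Pm i k := by
    intro k
    have := congrFun (congrFun hM i) k
    simpa [Matrix.diagonal_mul] using this
  have hDo : 0 < Do i := by
    rcases lt_or_eq_of_le (hDone i) with h | h
    · exact h
    · exfalso
      have hY' : Ustar = Matrix.diagonal Do * (Pm *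
          (Matrix.diagonal (fun k => Real.sqrt (d (I k))) *
          (Matrix.diagonal (fun k => (DU (I k))⁻¹) * S))) := by
        rw [hY]; simp only [Matrix.mul_assoc]
      obtain ⟨j, hj⟩ := Function.ne_iff.mp (hrows i)
      have h4 := congrFun (congrFun hY' i) j
      rw [Matrix.diagonal_mul, ← h, zero_mul] at h4
      have hU0 : Ustar i j = DU i * U i j := by
        simp [Ustar, Matrix.diagonal_mul]
      rw [hU0] at h4
      rcases mul_eq_zero.mp h4 with h1 | h1
      · exact ne_of_gt (hDUpos i) h1
      · exact hj h1
  have hne : DU i ≠ 0 := ne_of_gt (hDUpos i)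
  have hc : ∀ k, Zs i k = (DU i)⁻¹ * Do i * Pm i k := by
    intro k
    calc Zs i k = (DU i)⁻¹ * (DU i * Zs i k) := by
          rw [← mul_assoc, inv_mul_cancel₀ hne, one_mul]
      _ = (DU i)⁻¹ * Do i * Pm i k := by rw [hkey k, mul_assoc]
  have hcpos : 0 < (DU i)⁻¹ * Do i := mul_pos (inv_pos.mpr (hDUpos i)) hDo
  have hsum : (∑ k', |Zs i k'|) = (DU i)⁻¹ * Do i := by
    have habs : ∀ k', |Zs i k'| = (DU i)⁻¹ * Do i * Pm i k' := by
      intro k'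
      rw [hc k', abs_of_nonneg (mul_nonneg hcpos.le (hnn i k'))]
    rw [Finset.sum_congr rfl (fun k' _ => habs k'), ← Finset.mul_sum, hrow i, mul_one]
  rw [hsum, hc k]
  exact (mul_div_cancel_left₀ (Pm i k) (ne_of_gt hcpos)).symm
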